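/- Let α ∈ ℤ[ω] (ω a primitive cube root of unity) with 3 not dividing N(α). Then α or −α can be written in the form −1 + (A+Bω)(1−ω) for some integers A, B. -/

import Mathlib

theorem eisenstein_unit_normal_form (x y : ℤ) (h : ¬ (3 : ℤ) ∣ (x^2 - x*y + y^2)) :
    let ω : ℂ := Complex.exp (2 * Real.pi * Complex.I / 3)
    ∃ (A B ε : ℤ), (ε = 1 ∨ ε = -1) ∧
      (ε : ℂ) * ((x : ℂ) + (y : ℂ) * ω) = -1 + ((A : ℂ) + (B : ℂ) * ω) * (1 - ω) := by
  intro ω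
  have hprim : IsPrimitiveRoot ω 3 := by
    have := Complex.isPrimitiveRoot_exp 3 (by norm_num)
    convert this using 2
    norm_num
  have hpow : ω ^ 3 = 1 := hprim.pow_eq_one
  have hne : ω ≠ 1 := hprim.ne_one (by norm_num)
  have hquad : ω ^ 2 + ω + 1 = 0 := by
    have hfac : (ω - 1) * (ω ^ 2 + ω + 1) = 0 := by
      linear_combination hpow
    rcases mul_eq_zero.mp hfac with h1 | h2
    · exact absurd (sub_eq_zero.mp h1) hne
    · exact h2
  have h3 : ¬ (3 : ℤ) ∣ (x + y) := by
    rintro ⟨k, hk⟩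
    exact h ⟨3 * k ^ 2 - x * y, by linear_combination (x + y + 3 * k) * hk⟩
  have hex : ∃ ε : ℤ, (ε = 1 ∨ ε = -1) ∧ (3 : ℤ) ∣ ε * (x + y) + 1 := by
    by_cases hc : (x + y) % 3 = 1
    · exact ⟨-1, Or.inr rfl, by omega⟩
    · have : (x + y) % 3 = 2 := by omega
      exact ⟨1, Or.inl rfl, by omega⟩
  obtain ⟨ε, hε, k, hk⟩ := hex
  refine ⟨ε * x + 1 - k, k, ε, hε, ?_⟩
  have hkC : (ε : ℂ) * ((x : ℂ) + (y : ℂ)) + 1 = 3 * (k : ℂ) := by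
    exact_mod_cast congrArg (Int.cast : ℤ → ℂ) hk
  push_cast
  linear_combination ω * hkC + (k : ℂ) * hquad
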